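/- In the five-state symmetric protocol of Algorithm 3 (states r^ω₀, r^ω₁, b^ω, r, b), in any configuration reachable from the all-r^ω₀ configuration, the equation #r = #b + 2·#b^ω holds. -/
import Mathlib


/-- States of the five-state symmetric protocol: r^ω₀, r^ω₁, b^ω, r, b. -/
inductive St : Type
  | rw0 | rw1 | bw | r | b
deriving DecidableEq

/-- Deterministic transition function of Algorithm 3 (with symmetric variants). -/
def delta : St → St → St × St
  | .rw0, .rw0 => (.rw1, .rw1)
  | .rw1, .rw1 => (.rw0, .rw0)
  | .rw0, .rw1 => (.r, .b)
  | .rw1, .rw0 => (.b, .r)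
  | .rw0, .r   => (.r, .rw0)
  | .r,  .rw0  => (.rw0, .r)
  | .rw1, .r   => (.r, .rw0)
  | .r,  .rw1  => (.rw0, .r)
  | .bw, .b    => (.b, .bw)
  | .b,  .bw   => (.bw, .b)
  | .rw0, .b   => (.r, .bw)
  | .b,  .rw0  => (.bw, .r)
  | .rw1, .b   => (.r, .bw)
  | .b,  .rw1  => (.bw, .r)
  | .bw, .r    => (.b, .rw0)
  | .r,  .bw   => (.rw0, .b)
  | .rw0, .bw  => (.b, .b)
  | .bw, .rw0  => (.b, .b)
  | .rw1, .bw  => (.b, .b)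
  | .bw, .rw1  => (.b, .b)
  | p, q       => (p, q)

/-- One step: apply the rule to an ordered pair of distinct agents. -/
def Step {n : ℕ} (C C' : Fin n → St) : Prop :=
  ∃ i j : Fin n, i ≠ j ∧
    C' = Function.update (Function.update C i (delta (C i) (C j)).1) j
          (delta (C i) (C j)).2

/-- Number of agents in state `s`. -/
def cnt {n : ℕ} (C : Fin n → St) (s : St) : ℕ :=
  (Finset.univ.filter fun a => C a = s).card

/-- Number of token-holding agents (state r^ω₀, r^ω₁ or b^ω). -/
def tokens {n : ℕ} (C : Fin n → St) : ℕ := cnt C .rw0 + cnt C .rw1 + cnt C .bw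

/-- Number of red agents (state r^ω₀, r^ω₁ or r). -/
def reds {n : ℕ} (C : Fin n → St) : ℕ := cnt C .rw0 + cnt C .rw1 + cnt C .r

/-- Number of blue agents (state b^ω or b). -/
def blues {n : ℕ} (C : Fin n → St) : ℕ := cnt C .bw + cnt C .b


def g : St → ℤ
  | .r => 1
  | .b => -1
  | .bw => -2
  | _ => 0

lemma g_delta (p q : St) : g (delta p q).1 + g (delta p q).2 = g p + g q := by
  cases p <;> cases q <;> rfl

lemma g_eq (s : St) : g s = (if s = .r then (1:ℤ) else 0) - (if s = .b then 1 else 0)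
    - 2 * (if s = .bw then 1 else 0) := by
  cases s <;> rfl

lemma sum_g_eq {n : ℕ} (C : Fin n → St) :
    ∑ a, g (C a) = (cnt C .r : ℤ) - cnt C .b - 2 * cnt C .bw := by
  have hc : ∀ s : St, (cnt C s : ℤ) = ∑ a, (if C a = s then (1:ℤ) else 0) := by
    intro s
    simp [cnt, Finset.sum_ite_eq, Finset.sum_boole]
  simp only [hc, Finset.mul_sum, ← Finset.sum_sub_distrib]
  exact Finset.sum_congr rfl fun a _ => g_eq (C a)

lemma sum_update {n : ℕ} (h : Fin n → ℤ) (i : Fin n) (v : ℤ) :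
    ∑ a, Function.update h i v a = ∑ a, h a - h i + v := by
  rw [Finset.sum_update_of_mem (Finset.mem_univ i)]
  rw [← Finset.add_sum_erase _ h (Finset.mem_univ i)]
  simp [Finset.sdiff_singleton_eq_erase]
  ring

lemma step_inv {n : ℕ} (C C' : Fin n → St) (h : Step C C') :
    ∑ a, g (C' a) = ∑ a, g (C a) := by
  obtain ⟨i, j, hij, rfl⟩ := h
  have hcomp : ∀ (D : Fin n → St) (k : Fin n) (v : St),
      (fun a => g (Function.update D k v a)) = Function.update (fun a => g (D a)) k (g v) := by
    intro D k v
    funext a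
    by_cases ha : a = k <;> simp [Function.update, ha]
  rw [hcomp, sum_update, hcomp, sum_update]
  have hji : Function.update C i (delta (C i) (C j)).1 j = C j :=
    Function.update_of_ne (Ne.symm hij) _ _
  rw [hji]
  have := g_delta (C i) (C j)
  linarith

theorem stmt6 (n : ℕ) (C : Fin n → St)
    (h : Relation.ReflTransGen Step (fun _ => St.rw0) C) :
    cnt C .r = cnt C .b + 2 * cnt C .bw := by
  have key : ∑ a, g (C a) = 0 := by
    induction h with
    | refl => simp [g]
    | tail _ hs ih => rw [step_inv _ _ hs, ih]
  rw [sum_g_eq] at key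
  omega
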